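/- Let p ≥ 1, (μ_n) a sequence of Borel probability measures on ℝ each with finite p-th moment, and μ a Borel probability measure on ℝ. If μ_n converges weakly to μ and sup_n ∫_{|x|≥R} |x|^p dμ_n(x) → 0 as R → ∞, then μ has finite p-th moment and W_p(μ_n, μ) → 0. -/

import Mathlib

open MeasureTheory Filter Set
open scoped ENNReal Topology

set_option linter.unusedSectionVars false
set_option linter.unusedVariables false
set_option maxHeartbeats 1000000

open ProbabilityTheory
open scoped NNReal

noncomputable section

namespace Stmt18Aux

/-- Quantile function of a measure on `ℝ`. -/
noncomputable def qf (ν : Measure ℝ) (u : ℝ) : ℝ := sInf {x | u ≤ cdf ν x}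

variable (ν : Measure ℝ) [IsProbabilityMeasure ν]

lemma nonempty_qfSet {u : ℝ} (hu : u < 1) : {x | u ≤ cdf ν x}.Nonempty := by
  have := (tendsto_cdf_atTop (μ := ν)).eventually_const_le hu
  rcases this.exists with ⟨x, hx⟩
  exact ⟨x, hx⟩

lemma bddBelow_qfSet {u : ℝ} (hu : 0 < u) : BddBelow {x | u ≤ cdf ν x} := by
  have := (tendsto_cdf_atBot (μ := ν)).eventually_lt_const hu
  rcases this.exists with ⟨x0, hx0⟩
  refine ⟨x0, fun y hy => ?_⟩
  by_contra hxy
  push_neg at hxy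
  exact absurd (le_trans hy (monotone_cdf ν hxy.le)) (not_le.2 hx0)

lemma qf_le_of_le_cdf {u x : ℝ} (hu : 0 < u) (h : u ≤ cdf ν x) : qf ν u ≤ x :=
  csInf_le (bddBelow_qfSet ν hu) h

lemma le_qf_of_cdf_lt {u x : ℝ} (hu : u < 1) (h : cdf ν x < u) : x ≤ qf ν u := by
  refine le_csInf (nonempty_qfSet ν hu) fun y hy => ?_
  by_contra hxy
  push_neg at hxy
  exact absurd (le_trans hy (monotone_cdf ν hxy.le)) (not_le.2 h)

lemma le_cdf_of_qf_le {u x : ℝ} (hu1 : u < 1) (h : qf ν u ≤ x) : u ≤ cdf ν x := by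
  have key : ∀ y ∈ Ioi x, u ≤ cdf ν y := by
    intro y hy
    obtain ⟨z, hz, hzy⟩ := exists_lt_of_csInf_lt (nonempty_qfSet ν hu1) (lt_of_le_of_lt h hy)
    exact le_trans hz (monotone_cdf ν hzy.le)
  have hrc : ContinuousWithinAt (cdf ν) (Ioi x) x :=
    ((cdf ν).right_continuous x).mono Ioi_subset_Ici_self
  exact ge_of_tendsto hrc (eventually_nhdsWithin_of_forall key)

lemma qf_le_iff {u x : ℝ} (hu0 : 0 < u) (hu1 : u < 1) :
    qf ν u ≤ x ↔ u ≤ cdf ν x :=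
  ⟨le_cdf_of_qf_le ν hu1, qf_le_of_le_cdf ν hu0⟩

lemma qf_of_nonpos {u : ℝ} (hu : u ≤ 0) : qf ν u = 0 := by
  have h : {x | u ≤ cdf ν x} = univ := eq_univ_of_forall fun x => hu.trans (cdf_nonneg ν x)
  have hnb : ¬BddBelow (univ : Set ℝ) := by
    rintro ⟨b, hb⟩
    exact absurd (hb (mem_univ (b - 1))) (by norm_num)
  rw [qf, h, csInf_of_not_bddBelow hnb, Real.sInf_empty]

lemma qf_of_one_lt {u : ℝ} (hu : 1 < u) : qf ν u = 0 := by
  have h : {x | u ≤ cdf ν x} = ∅ :=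
    eq_empty_of_forall_notMem fun x hx => absurd (le_trans hx (cdf_le_one ν x)) (not_le.2 hu)
  rw [qf, h, Real.sInf_empty]

lemma monotoneOn_qf : MonotoneOn (qf ν) (Ioo 0 1) := fun u hu v hv huv =>
  csInf_le_csInf (bddBelow_qfSet ν hu.1) (nonempty_qfSet ν hv.2)
    (fun x hx => le_trans huv hx)

lemma measurable_qf : Measurable (qf ν) := by
  apply measurable_of_Iic
  intro a
  have hsplit : qf ν ⁻¹' Iic a =
      (Ioo 0 1 ∩ Iic (cdf ν a)) ∪ ((Iic 0 ∪ Ioi 1) ∩ qf ν ⁻¹' Iic a)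
        ∪ ({1} ∩ qf ν ⁻¹' Iic a) := by
    ext u
    simp only [mem_preimage, mem_Iic, mem_union, mem_inter_iff, mem_Ioo, mem_Iic, mem_Ioi,
      mem_singleton_iff]
    constructor
    · intro h
      rcases le_or_gt u 0 with h0 | h0
      · exact Or.inl (Or.inr ⟨Or.inl h0, h⟩)
      rcases lt_trichotomy u 1 with h1 | h1 | h1
      · exact Or.inl (Or.inl ⟨⟨h0, h1⟩, (qf_le_iff ν h0 h1).1 h⟩)
      · exact Or.inr ⟨h1, h⟩
      · exact Or.inl (Or.inr ⟨Or.inr h1, h⟩)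
    · rintro ((⟨⟨h0, h1⟩, h⟩ | ⟨_, h⟩) | ⟨_, h⟩)
      · exact (qf_le_iff ν h0 h1).2 h
      · exact h
      · exact h
  rw [hsplit]
  have h2 : (Iic 0 ∪ Ioi 1) ∩ qf ν ⁻¹' Iic a
      = {u ∈ Iic 0 ∪ Ioi 1 | (0:ℝ) ≤ a} := by
    ext u
    simp only [mem_inter_iff, mem_preimage, mem_Iic, mem_sep_iff, mem_union, mem_Ioi]
    constructor
    · rintro ⟨hu, h⟩
      refine ⟨hu, ?_⟩
      rcases hu with hu | hu
      · rwa [qf_of_nonpos ν hu] at h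
      · rwa [qf_of_one_lt ν hu] at h
    · rintro ⟨hu, h⟩
      refine ⟨hu, ?_⟩
      rcases hu with hu | hu
      · rwa [qf_of_nonpos ν hu]
      · rwa [qf_of_one_lt ν hu]
  have h2m : MeasurableSet ((Iic 0 ∪ Ioi 1) ∩ qf ν ⁻¹' Iic a) := by
    rw [h2]
    by_cases h : (0:ℝ) ≤ a
    · simp only [h, sep_true]
      exact (measurableSet_Iic.union measurableSet_Ioi)
    · simp only [h, sep_false]
      exact MeasurableSet.empty
  have h3m : MeasurableSet (({1} : Set ℝ) ∩ qf ν ⁻¹' Iic a) :=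
    (Set.Countable.mono inter_subset_left (countable_singleton 1)).measurableSet
  exact ((measurableSet_Ioo.inter measurableSet_Iic).union h2m).union h3m

instance : IsProbabilityMeasure (volume.restrict (Ioo (0:ℝ) 1)) :=
  ⟨by rw [Measure.restrict_apply_univ, Real.volume_Ioo]; norm_num⟩

lemma map_qf : Measure.map (qf ν) (volume.restrict (Ioo (0:ℝ) 1)) = ν := by
  have hprob : IsProbabilityMeasure (Measure.map (qf ν) (volume.restrict (Ioo (0:ℝ) 1))) :=
    Measure.isProbabilityMeasure_map (measurable_qf ν).aemeasurable
  refine Measure.ext_of_Iic _ ν fun a => ?_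
  rw [Measure.map_apply (measurable_qf ν) measurableSet_Iic,
    Measure.restrict_apply ((measurable_qf ν) measurableSet_Iic)]
  have hset : qf ν ⁻¹' Iic a ∩ Ioo 0 1 = Iic (cdf ν a) ∩ Ioo 0 1 := by
    ext u
    simp only [mem_inter_iff, mem_preimage, mem_Iic, mem_Ioo, and_congr_left_iff]
    rintro ⟨h0, h1⟩
    exact qf_le_iff ν h0 h1
  rw [hset, ← ofReal_cdf ν a]
  rcases eq_or_lt_of_le (cdf_le_one ν a) with h1 | h1
  · have : Iic (cdf ν a) ∩ Ioo 0 1 = Ioo (0:ℝ) 1 := by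
      rw [inter_eq_right]
      exact fun u hu => le_trans hu.2.le (by rw [h1])
    rw [this, Real.volume_Ioo, h1]
    norm_num
  · have : Iic (cdf ν a) ∩ Ioo 0 1 = Ioc 0 (cdf ν a) := by
      ext u
      simp only [mem_inter_iff, mem_Iic, mem_Ioo, mem_Ioc]
      exact ⟨fun ⟨h, h0, _⟩ => ⟨h0, h⟩, fun ⟨h0, h⟩ => ⟨h, h0, lt_of_le_of_lt h h1⟩⟩
    rw [this, Real.volume_Ioc, sub_zero]

lemma lintegral_qf (g : ℝ → ℝ≥0∞) (hg : Measurable g) :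
    ∫⁻ u, g (qf ν u) ∂(volume.restrict (Ioo (0:ℝ) 1)) = ∫⁻ x, g x ∂ν := by
  rw [← lintegral_map hg (measurable_qf ν), map_qf ν]

/-- countability of the set of "right-jump" points of a function monotone on `Ioo 0 1`. -/
lemma countable_bad (Q : ℝ → ℝ) (hmono : MonotoneOn Q (Ioo 0 1)) :
    Set.Countable {u : ℝ | u ∈ Ioo (0:ℝ) 1 ∧
      ¬ ∀ ε > (0:ℝ), ∃ v, u < v ∧ v < 1 ∧ Q v < Q u + ε} := by
  classical
  set B := {u : ℝ | u ∈ Ioo (0:ℝ) 1 ∧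
      ¬ ∀ ε > (0:ℝ), ∃ v, u < v ∧ v < 1 ∧ Q v < Q u + ε} with hB
  have hex : ∀ u ∈ B, ∃ q : ℚ, Q u < q ∧ ∀ v, u < v → v < 1 → (q:ℝ) ≤ Q v := by
    rintro u ⟨hu, hbad⟩
    push_neg at hbad
    obtain ⟨ε, hε, hεall⟩ := hbad
    obtain ⟨q, hq1, hq2⟩ := exists_rat_btwn (lt_add_of_pos_right (Q u) hε)
    exact ⟨q, hq1, fun v huv hv1 => le_trans hq2.le (hεall v huv hv1)⟩
  choose! g hg1 hg2 using hex
  have hmonoq : ∀ u ∈ B, ∀ v ∈ B, u < v → g u < g v := by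
    intro u hu v hv huv
    have hw : (u + v) / 2 ∈ Ioo u v := ⟨by linarith, by linarith⟩
    have h1 : (g u : ℝ) ≤ Q ((u + v) / 2) :=
      hg2 u hu _ hw.1 (lt_trans hw.2 hv.1.2)
    have h2 : Q ((u + v) / 2) ≤ Q v :=
      hmono ⟨lt_trans hu.1.1 hw.1, lt_trans hw.2 hv.1.2⟩ hv.1 hw.2.le
    have : (g u : ℝ) < (g v : ℝ) := lt_of_le_of_lt (h1.trans h2) (hg1 v hv)
    exact_mod_cast this
  refine Set.countable_iff_exists_injOn.2 ⟨fun u => Encodable.encode (g u), ?_⟩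
  intro u hu v hv huv
  by_contra hne
  rcases lt_or_gt_of_ne hne with h | h
  · exact absurd (congrArg (Encodable.decode (α := ℚ)) huv)
      (by simp [Encodable.encodek, (hmonoq u hu v hv h).ne])
  · exact absurd (congrArg (Encodable.decode (α := ℚ)) huv)
      (by simp [Encodable.encodek, (hmonoq v hv u hu h).ne'])

variable (μ : Measure ℝ) [IsProbabilityMeasure μ]

lemma dense_contPts : Dense {x : ℝ | ContinuousAt (cdf μ) x} := by
  have h := ((cdf μ).mono.countable_not_continuousAt).dense_compl ℝ
  have heq : {x : ℝ | ¬ContinuousAt (cdf μ) x}ᶜ = {x : ℝ | ContinuousAt (cdf μ) x} := by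
    ext x; simp
  rwa [heq] at h

lemma meas_singleton_zero {x : ℝ} (hx : ContinuousAt (cdf μ) x) : μ {x} = 0 := by
  have key : ∀ y < x, μ {x} ≤ ENNReal.ofReal (cdf μ x - cdf μ y) := by
    intro y hy
    rw [← (cdf μ).measure_Ioc y x, measure_cdf]
    exact measure_mono (by simp [hy])
  have htend : Tendsto (fun y => ENNReal.ofReal (cdf μ x - cdf μ y)) (𝓝[<] x)
      (𝓝 (ENNReal.ofReal (cdf μ x - cdf μ x))) := by
    apply ENNReal.continuous_ofReal.continuousAt.tendsto.comp
    exact tendsto_const_nhds.sub (hx.tendsto.mono_left nhdsWithin_le_nhds)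
  simp only [sub_self, ENNReal.ofReal_zero] at htend
  have hle : μ {x} ≤ 0 :=
    ge_of_tendsto htend (eventually_nhdsWithin_of_forall fun y hy => key y hy)
  exact le_antisymm hle (zero_le)

lemma cdf_tendsto_of_contPt (μs : ℕ → Measure ℝ)
    [∀ n, IsProbabilityMeasure (μs n)]
    (hweak : ∀ φ : BoundedContinuousFunction ℝ ℝ,
      Tendsto (fun n => ∫ x, φ x ∂(μs n)) atTop (𝓝 (∫ x, φ x ∂μ)))
    {x : ℝ} (hx : μ {x} = 0) :
    Tendsto (fun n => cdf (μs n) x) atTop (𝓝 (cdf μ x)) := by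
  set P : ProbabilityMeasure ℝ := ⟨μ, inferInstance⟩
  set Ps : ℕ → ProbabilityMeasure ℝ := fun n => ⟨μs n, inferInstance⟩
  have hlim : Tendsto Ps atTop (𝓝 P) := by
    rw [ProbabilityMeasure.tendsto_iff_forall_integral_tendsto]
    exact hweak
  have hbdry : P (frontier (Iic x)) = 0 := by
    rw [frontier_Iic]
    simp [P, ProbabilityMeasure.coeFn_def, hx]
  have key := ProbabilityMeasure.tendsto_measure_of_null_frontier_of_tendsto hlim hbdry
  have key2 : Tendsto (fun n => ((Ps n (Iic x) : ℝ≥0) : ℝ)) atTop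
      (𝓝 ((P (Iic x) : ℝ≥0) : ℝ)) := (NNReal.continuous_coe.tendsto _).comp key
  convert key2 using 2 with n
  · exact cdf_eq_real (μs n) x
  · exact cdf_eq_real μ x

lemma tendsto_qf_of_good (μs : ℕ → Measure ℝ)
    [∀ n, IsProbabilityMeasure (μs n)]
    (hF : ∀ x : ℝ, ContinuousAt (cdf μ) x →
      Tendsto (fun n => cdf (μs n) x) atTop (𝓝 (cdf μ x)))
    {u : ℝ} (hu : u ∈ Ioo (0:ℝ) 1)
    (hgood : ∀ ε > (0:ℝ), ∃ v, u < v ∧ v < 1 ∧ qf μ v < qf μ u + ε) :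
    Tendsto (fun n => qf (μs n) u) atTop (𝓝 (qf μ u)) := by
  have hdense : Dense {x : ℝ | ContinuousAt (cdf μ) x} := dense_contPts μ
  rw [tendsto_order]
  constructor
  · intro b hb
    obtain ⟨x, hxc, hxmem⟩ := hdense.exists_mem_open isOpen_Ioo (nonempty_Ioo.2 hb)
    have hFx : cdf μ x < u := by
      by_contra h
      push_neg at h
      exact absurd (qf_le_of_le_cdf μ hu.1 h) (not_le.2 hxmem.2)
    filter_upwards [(hF x hxc).eventually_lt_const hFx] with n hn
    exact lt_of_lt_of_le hxmem.1 (le_qf_of_cdf_lt (μs n) hu.2 hn)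
  · intro b hb
    obtain ⟨v, huv, hv1, hqv⟩ := hgood (b - qf μ u) (by linarith)
    have hqvb : qf μ v < b := by linarith
    obtain ⟨x, hxc, hxmem⟩ := hdense.exists_mem_open isOpen_Ioo (nonempty_Ioo.2 hqvb)
    have hvF : v ≤ cdf μ x := le_cdf_of_qf_le μ hv1 hxmem.1.le
    have huF : u < cdf μ x := lt_of_lt_of_le huv hvF
    filter_upwards [(hF x hxc).eventually_const_lt huF] with n hn
    exact lt_of_le_of_lt (qf_le_of_le_cdf (μs n) hu.1 hn.le) hxmem.2

end Stmt18Aux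

end

open Stmt18Aux

/-- Wasserstein distance of order `p` between measures on `ℝ`, defined via
couplings, with possibly infinite value. -/
noncomputable def Wp (p : ℝ) (μ ν : Measure ℝ) : ℝ≥0∞ :=
  (⨅ π ∈ {π : Measure (ℝ × ℝ) | π.map Prod.fst = μ ∧ π.map Prod.snd = ν},
    ∫⁻ q, ENNReal.ofReal (|q.1 - q.2| ^ p) ∂π) ^ (1 / p)

/-- if `μ_n` (with finite `p`-th moments) converge weakly to a
probability measure `μ`, and the `p`-th moments of the `μ_n` are uniformly
integrable at infinity, then `μ` has finite `p`-th moment and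
`W_p(μ_n, μ) → 0`. -/
theorem stmt_18 (p : ℝ) (hp : 1 ≤ p)
    (μs : ℕ → Measure ℝ) (μ : Measure ℝ)
    [∀ n, IsProbabilityMeasure (μs n)] [IsProbabilityMeasure μ]
    (hmom : ∀ n, ∫⁻ x, ENNReal.ofReal (|x| ^ p) ∂(μs n) < ⊤)
    (hweak : ∀ φ : BoundedContinuousFunction ℝ ℝ,
      Tendsto (fun n => ∫ x, φ x ∂(μs n)) atTop (𝓝 (∫ x, φ x ∂μ)))
    (htail : Tendsto
      (fun R : ℝ => ⨆ n, ∫⁻ x in {x : ℝ | R ≤ |x|},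
        ENNReal.ofReal (|x| ^ p) ∂(μs n)) atTop (𝓝 0)) :
    (∫⁻ x, ENNReal.ofReal (|x| ^ p) ∂μ < ⊤) ∧
      Tendsto (fun n => Wp p (μs n) μ) atTop (𝓝 0) := by
  classical
  have hp0 : 0 < p := lt_of_lt_of_le one_pos hp
  set ω : Measure ℝ := volume.restrict (Ioo (0:ℝ) 1) with hωdef
  have hφc : Continuous fun x : ℝ => |x| ^ p :=
    (continuous_iff_continuousAt.2 fun t =>
      Real.continuousAt_rpow_const t p (Or.inr hp0.le)).comp continuous_abs
  set φ : ℝ → ℝ≥0∞ := fun x => ENNReal.ofReal (|x| ^ p) with hφdef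
  have hφm : Measurable φ := hφc.measurable.ennreal_ofReal
  have hφcont : Continuous φ := ENNReal.continuous_ofReal.comp hφc
  set Q : ℕ → ℝ → ℝ := fun n => qf (μs n) with hQdef
  set Q0 : ℝ → ℝ := qf μ with hQ0def
  have hQm : ∀ n, Measurable (Q n) := fun n => measurable_qf (μs n)
  have hQ0m : Measurable Q0 := measurable_qf μ
  -- transport along the quantile coupling
  have htransn : ∀ (n : ℕ) (g : ℝ → ℝ≥0∞), Measurable g →
      ∫⁻ u, g (Q n u) ∂ω = ∫⁻ x, g x ∂(μs n) := fun n g hg => lintegral_qf (μs n) g hg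
  have htrans0 : ∀ (g : ℝ → ℝ≥0∞), Measurable g →
      ∫⁻ u, g (Q0 u) ∂ω = ∫⁻ x, g x ∂μ := fun g hg => lintegral_qf μ g hg
  -- cdf convergence at continuity points
  have hF : ∀ x, ContinuousAt (cdf μ) x →
      Tendsto (fun n => cdf (μs n) x) atTop (𝓝 (cdf μ x)) :=
    fun x hx => cdf_tendsto_of_contPt μ μs hweak (meas_singleton_zero μ hx)
  -- a.e. convergence of quantile functions
  have hae : ∀ᵐ u ∂ω, Tendsto (fun n => Q n u) atTop (𝓝 (Q0 u)) := by
    have h1 : ω (Ioo (0:ℝ) 1)ᶜ = 0 := by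
      rw [hωdef, Measure.restrict_apply measurableSet_Ioo.compl, compl_inter_self]
      simp
    have h2 : ω {u : ℝ | u ∈ Ioo (0:ℝ) 1 ∧
        ¬ ∀ ε > (0:ℝ), ∃ v, u < v ∧ v < 1 ∧ Q0 v < Q0 u + ε} = 0 :=
      le_antisymm (le_trans (Measure.le_iff'.1 Measure.restrict_le_self _)
        ((countable_bad Q0 (monotoneOn_qf μ)).measure_zero volume).le) (zero_le)
    have hsub : {u : ℝ | ¬ Tendsto (fun n => Q n u) atTop (𝓝 (Q0 u))} ⊆
        (Ioo (0:ℝ) 1)ᶜ ∪ {u : ℝ | u ∈ Ioo (0:ℝ) 1 ∧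
          ¬ ∀ ε > (0:ℝ), ∃ v, u < v ∧ v < 1 ∧ Q0 v < Q0 u + ε} := by
      intro u hu
      by_cases hmem : u ∈ Ioo (0:ℝ) 1
      · exact Or.inr ⟨hmem, fun hgood => hu (tendsto_qf_of_good μ μs hF hmem hgood)⟩
      · exact Or.inl hmem
    exact ae_iff.2 (measure_mono_null hsub (measure_union_null h1 h2))
  -- uniform moment bound
  obtain ⟨R, hRlt, hR0⟩ :=
    ((htail.eventually_lt_const (zero_lt_one (α := ℝ≥0∞))).and
      (eventually_ge_atTop (0:ℝ))).exists
  set K : ℝ≥0∞ := 1 + ENNReal.ofReal (R ^ p) with hKdef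
  have hKtop : K ≠ ⊤ := by
    rw [hKdef]
    exact ENNReal.add_ne_top.2 ⟨ENNReal.one_ne_top, ENNReal.ofReal_ne_top⟩
  have habs : MeasurableSet {x : ℝ | R ≤ |x|} :=
    (isClosed_le continuous_const continuous_abs).measurableSet
  have hμsK : ∀ n, ∫⁻ x, φ x ∂(μs n) ≤ K := by
    intro n
    rw [← lintegral_add_compl φ habs, hKdef]
    refine add_le_add ?_ ?_
    · exact le_trans (le_iSup (fun n => ∫⁻ x in {x : ℝ | R ≤ |x|}, φ x ∂(μs n)) n) hRlt.le
    · calc ∫⁻ x in {x : ℝ | R ≤ |x|}ᶜ, φ x ∂(μs n)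
          ≤ ∫⁻ _ in {x : ℝ | R ≤ |x|}ᶜ, ENNReal.ofReal (R ^ p) ∂(μs n) := by
            refine setLIntegral_mono measurable_const fun x hx => ?_
            have hxR : |x| < R := not_le.1 hx
            exact ENNReal.ofReal_le_ofReal
              (Real.rpow_le_rpow (abs_nonneg x) hxR.le hp0.le)
        _ = ENNReal.ofReal (R ^ p) * (μs n) {x : ℝ | R ≤ |x|}ᶜ := setLIntegral_const _ _
        _ ≤ ENNReal.ofReal (R ^ p) * 1 := mul_le_mul_right prob_le_one _
        _ = ENNReal.ofReal (R ^ p) := mul_one _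
  -- a.e. convergence of the p-th powers
  have haeφ : ∀ᵐ u ∂ω, Tendsto (fun n => φ (Q n u)) atTop (𝓝 (φ (Q0 u))) :=
    hae.mono fun u hu => (hφcont.tendsto _).comp hu
  -- finiteness of target moments
  have hμK : ∫⁻ x, φ x ∂μ ≤ K := by
    have h1 : ∫⁻ u, φ (Q0 u) ∂ω ≤ K := by
      calc ∫⁻ u, φ (Q0 u) ∂ω
          = ∫⁻ u, liminf (fun n => φ (Q n u)) atTop ∂ω :=
            lintegral_congr_ae (haeφ.mono fun u hu => hu.liminf_eq.symm)
        _ ≤ liminf (fun n => ∫⁻ u, φ (Q n u) ∂ω) atTop :=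
            lintegral_liminf_le fun n => hφm.comp (hQm n)
        _ = liminf (fun n => ∫⁻ x, φ x ∂(μs n)) atTop := by
            congr 1
            funext n
            exact htransn n φ hφm
        _ ≤ liminf (fun _ : ℕ => K) atTop :=
            liminf_le_liminf (Eventually.of_forall hμsK)
        _ = K := liminf_const K
    calc ∫⁻ x, φ x ∂μ = ∫⁻ u, φ (Q0 u) ∂ω := (htrans0 φ hφm).symm
      _ ≤ K := h1
  have hfin : ∫⁻ x, φ x ∂μ < ⊤ := lt_of_le_of_lt hμK (lt_top_iff_ne_top.2 hKtop)
  refine ⟨hfin, ?_⟩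
  -- L^p setup
  set p' : ℝ≥0∞ := ENNReal.ofReal p with hp'def
  have hp'1 : 1 ≤ p' := ENNReal.one_le_ofReal.2 hp
  have hp'0 : p' ≠ 0 := by
    rw [hp'def]
    simp [ENNReal.ofReal_eq_zero, not_le, hp0]
  have hp'top : p' ≠ ⊤ := ENNReal.ofReal_ne_top
  have hp'real : p'.toReal = p := ENNReal.toReal_ofReal hp0.le
  have hnn : ∀ a : ℝ, ((‖a‖₊ : ℝ≥0∞)) ^ p = φ a := by
    intro a
    rw [← enorm_eq_nnnorm, ← ofReal_norm, Real.norm_eq_abs,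
      ENNReal.ofReal_rpow_of_nonneg (abs_nonneg a) hp0.le]
  have hsnorm : ∀ (f : ℝ → ℝ) (m : Measure ℝ),
      eLpNorm f p' m = (∫⁻ u, φ (f u) ∂m) ^ (1/p) := by
    intro f m
    rw [eLpNorm_eq_lintegral_rpow_enorm_toReal hp'0 hp'top, hp'real]
    congr 1
    exact lintegral_congr fun u => hnn (f u)
  -- Memℒp of the limit quantile function
  have hQ0int : ∫⁻ u, φ (Q0 u) ∂ω ≤ K := by
    rw [htrans0 φ hφm]; exact hμK
  have hQ0mem : MemLp Q0 p' ω := by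
    refine ⟨hQ0m.aestronglyMeasurable, ?_⟩
    rw [hsnorm]
    exact ENNReal.rpow_lt_top_of_nonneg (by positivity)
      (lt_of_le_of_lt hQ0int (lt_top_iff_ne_top.2 hKtop)).ne
  -- uniform integrability
  have hui : UnifIntegrable Q p' ω := by
    refine unifIntegrable_of hp'1 hp'top (fun n => (hQm n).aestronglyMeasurable) ?_
    intro ε hε
    have hδpos : (0:ℝ≥0∞) < ENNReal.ofReal ε ^ p :=
      ENNReal.rpow_pos (ENNReal.ofReal_pos.2 hε) ENNReal.ofReal_ne_top
    obtain ⟨R', hR'lt, hR'0⟩ :=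
      ((htail.eventually_lt_const hδpos).and (eventually_ge_atTop (0:ℝ))).exists
    refine ⟨R'.toNNReal, fun n => ?_⟩
    have hT : MeasurableSet {x : ℝ | R' ≤ |x|} :=
      (isClosed_le continuous_const continuous_abs).measurableSet
    have hsetEq : {u : ℝ | R'.toNNReal ≤ ‖Q n u‖₊} = Q n ⁻¹' {x : ℝ | R' ≤ |x|} := by
      ext u
      simp only [mem_setOf_eq, mem_preimage, ← NNReal.coe_le_coe,
        Real.coe_toNNReal R' hR'0, coe_nnnorm, Real.norm_eq_abs]
    have hφ0 : φ 0 = 0 := by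
      rw [hφdef]
      simp [Real.zero_rpow hp0.ne']
    have hindic : ∀ u, φ ({u : ℝ | R'.toNNReal ≤ ‖Q n u‖₊}.indicator (Q n) u)
        = ({x : ℝ | R' ≤ |x|}.indicator φ) (Q n u) := by
      intro u
      rw [hsetEq]
      by_cases h : u ∈ Q n ⁻¹' {x : ℝ | R' ≤ |x|}
      · rw [Set.indicator_of_mem h, Set.indicator_of_mem (mem_preimage.1 h)]
      · rw [Set.indicator_of_notMem h,
          Set.indicator_of_notMem (fun hh => h (mem_preimage.2 hh)), hφ0]
    rw [hsnorm]
    have hcalc : ∫⁻ u, φ ({u : ℝ | R'.toNNReal ≤ ‖Q n u‖₊}.indicator (Q n) u) ∂ω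
        ≤ ENNReal.ofReal ε ^ p := by
      calc ∫⁻ u, φ ({u : ℝ | R'.toNNReal ≤ ‖Q n u‖₊}.indicator (Q n) u) ∂ω
          = ∫⁻ u, ({x : ℝ | R' ≤ |x|}.indicator φ) (Q n u) ∂ω :=
            lintegral_congr hindic
        _ = ∫⁻ x, {x : ℝ | R' ≤ |x|}.indicator φ x ∂(μs n) :=
            htransn n _ (hφm.indicator hT)
        _ = ∫⁻ x in {x : ℝ | R' ≤ |x|}, φ x ∂(μs n) := lintegral_indicator hT φ
        _ ≤ ⨆ n, ∫⁻ x in {x : ℝ | R' ≤ |x|}, φ x ∂(μs n) :=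
            le_iSup (fun n => ∫⁻ x in {x : ℝ | R' ≤ |x|}, φ x ∂(μs n)) n
        _ ≤ ENNReal.ofReal ε ^ p := hR'lt.le
    calc (∫⁻ u, φ ({u : ℝ | R'.toNNReal ≤ ‖Q n u‖₊}.indicator (Q n) u) ∂ω) ^ (1/p)
        ≤ (ENNReal.ofReal ε ^ p) ^ (1/p) := ENNReal.rpow_le_rpow hcalc (by positivity)
      _ = ENNReal.ofReal ε := by
          rw [← ENNReal.rpow_mul, mul_one_div_cancel hp0.ne', ENNReal.rpow_one]
  -- Vitali convergence theorem
  have hLp : Tendsto (fun n => eLpNorm (Q n - Q0) p' ω) atTop (𝓝 0) :=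
    tendsto_Lp_finite_of_tendsto_ae hp'1 hp'top
      (fun n => (hQm n).aestronglyMeasurable) hQ0mem hui hae
  -- bound Wp by the quantile coupling cost
  have hWle : ∀ n, Wp p (μs n) μ ≤ eLpNorm (Q n - Q0) p' ω := by
    intro n
    have hpair : Measurable fun u => (Q n u, Q0 u) := (hQm n).prodMk hQ0m
    set π : Measure (ℝ × ℝ) := Measure.map (fun u => (Q n u, Q0 u)) ω with hπdef
    have hmem : π ∈ {π : Measure (ℝ × ℝ) |
        π.map Prod.fst = μs n ∧ π.map Prod.snd = μ} := by
      constructor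
      · rw [hπdef, Measure.map_map measurable_fst hpair]
        exact map_qf (μs n)
      · rw [hπdef, Measure.map_map measurable_snd hpair]
        exact map_qf μ
    have hcostm : Measurable fun q : ℝ × ℝ => ENNReal.ofReal (|q.1 - q.2| ^ p) :=
      ((hφc.comp (continuous_fst.sub continuous_snd))).measurable.ennreal_ofReal
    have hcost : ∫⁻ q, ENNReal.ofReal (|q.1 - q.2| ^ p) ∂π
        = ∫⁻ u, φ (Q n u - Q0 u) ∂ω := by
      rw [hπdef, lintegral_map hcostm hpair]
    have hle : (⨅ π ∈ {π : Measure (ℝ × ℝ) |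
          π.map Prod.fst = μs n ∧ π.map Prod.snd = μ},
        ∫⁻ q, ENNReal.ofReal (|q.1 - q.2| ^ p) ∂π)
          ≤ ∫⁻ u, φ (Q n u - Q0 u) ∂ω := by
      rw [← hcost]
      exact iInf₂_le π hmem
    rw [Wp, hsnorm]
    exact ENNReal.rpow_le_rpow hle (by positivity)
  exact tendsto_of_tendsto_of_tendsto_of_le_of_le tendsto_const_nhds hLp
    (fun n => zero_le) hWle
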